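/- Let P ⊆ ℝ^d be a finite set of N points, 1 ≤ k ≤ N, and ρ ≥ 0. Then a point x ∈ ℝ^d satisfies d_{P,k}(x) ≤ ρ if and only if there exists a subset C ⊆ P with |C| = k such that ‖x − c̄_C‖² ≤ ρ² + w_{c̄_C}; i.e., the sublevel set d_{P,k}^{-1}([0,ρ]) equals the union over k-point subsets C of P of the closed balls centered at the barycenters c̄_C with squared radius ρ² + w_{c̄_C} (the ball being empty when ρ² + w_{c̄_C} < 0). -/

import Mathlib

open MeasureTheory Metric Finset

noncomputable section

/-- The barycenter of a finite set `C` of points, viewed as a set of `k` points. -/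
def bary {d : ℕ} (k : ℕ) (C : Finset (EuclideanSpace ℝ (Fin d))) :
    EuclideanSpace ℝ (Fin d) :=
  (k : ℝ)⁻¹ • ∑ p ∈ C, p

/-- The weight `w_{c̄_C} = -(1/k) ∑_{p ∈ C} ‖c̄_C - p‖²` of the barycenter of `C`. -/
def wt {d : ℕ} (k : ℕ) (C : Finset (EuclideanSpace ℝ (Fin d))) : ℝ :=
  -((k : ℝ)⁻¹ * ∑ p ∈ C, ‖bary k C - p‖ ^ 2)

/-- The `k`-distance to a finite point set `P`:
`d_{P,k}(x)² = min_{C ⊆ P, |C| = k} (1/k) ∑_{p ∈ C} ‖x - p‖²`. -/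
def kdist {d : ℕ} (P : Finset (EuclideanSpace ℝ (Fin d))) (k : ℕ)
    (x : EuclideanSpace ℝ (Fin d)) : ℝ :=
  Real.sqrt (sInf { y : ℝ | ∃ C ∈ P.powersetCard k, y = (k : ℝ)⁻¹ * ∑ p ∈ C, ‖x - p‖ ^ 2 })

lemma sum_sub_bary {d k : ℕ} (hk : k ≠ 0) (C : Finset (EuclideanSpace ℝ (Fin d)))
    (hC : C.card = k) : ∑ p ∈ C, (bary k C - p) = 0 := by
  rw [Finset.sum_sub_distrib, Finset.sum_const, hC, bary,
    ← Nat.cast_smul_eq_nsmul ℝ, smul_smul,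
    mul_inv_cancel₀ (by exact_mod_cast hk), one_smul, sub_self]

lemma key {d k : ℕ} (hk : k ≠ 0) (C : Finset (EuclideanSpace ℝ (Fin d)))
    (hC : C.card = k) (x : EuclideanSpace ℝ (Fin d)) :
    (k : ℝ)⁻¹ * ∑ p ∈ C, ‖x - p‖ ^ 2 = ‖x - bary k C‖ ^ 2 - wt k C := by
  have hkR : (k : ℝ) ≠ 0 := by exact_mod_cast hk
  have h : ∑ p ∈ C, ‖x - p‖ ^ 2
      = (k : ℝ) * ‖x - bary k C‖ ^ 2 + ∑ p ∈ C, ‖bary k C - p‖ ^ 2 := by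
    have e : ∀ p ∈ C, ‖x - p‖ ^ 2 = ‖x - bary k C‖ ^ 2
        + 2 * inner ℝ (x - bary k C) (bary k C - p) + ‖bary k C - p‖ ^ 2 := by
      intro p _
      have : x - p = (x - bary k C) + (bary k C - p) := by abel
      rw [this, @norm_add_sq_real]
    rw [Finset.sum_congr rfl e, Finset.sum_add_distrib, Finset.sum_add_distrib,
      Finset.sum_const, hC, ← Finset.mul_sum, ← inner_sum, sum_sub_bary hk C hC,
      inner_zero_right, nsmul_eq_mul]
    ring
  rw [wt, h]
  field_simp
  ring

/-- A point `x` lies in the `ρ`-sublevel set of the `k`-distance iff `x`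
belongs to one of the closed balls centered at a barycenter `c̄_C` of a `k`-point subset
`C ⊆ P`, with squared radius `ρ² + w_{c̄_C}`. -/
theorem kdist_sublevel_eq_union_balls {d : ℕ} (N k : ℕ)
    (P : Finset (EuclideanSpace ℝ (Fin d))) (hPN : P.card = N)
    (hk : 1 ≤ k) (hkN : k ≤ N) (ρ : ℝ) (hρ : 0 ≤ ρ) (x : EuclideanSpace ℝ (Fin d)) :
    kdist P k x ≤ ρ ↔
      ∃ C ∈ P.powersetCard k, ‖x - bary k C‖ ^ 2 ≤ ρ ^ 2 + wt k C := by
  have hk0 : k ≠ 0 := by omega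
  set S : Set ℝ :=
    { y : ℝ | ∃ C ∈ P.powersetCard k, y = (k : ℝ)⁻¹ * ∑ p ∈ C, ‖x - p‖ ^ 2 } with hS
  have hfin : S.Finite := by
    have : S ⊆ ↑((P.powersetCard k).image
        (fun C => (k : ℝ)⁻¹ * ∑ p ∈ C, ‖x - p‖ ^ 2)) := by
      rintro y ⟨C, hC, rfl⟩
      simp only [Finset.coe_image, Set.mem_image, Finset.mem_coe]
      exact ⟨C, hC, rfl⟩
    exact Set.Finite.subset (Finset.finite_toSet _) this
  have hne : S.Nonempty := by
    obtain ⟨C, hC⟩ := (Finset.powersetCard_nonempty.mpr (hPN ▸ hkN) :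
      (P.powersetCard k).Nonempty)
    exact ⟨_, C, hC, rfl⟩
  have hnonneg : ∀ y ∈ S, 0 ≤ y := by
    rintro y ⟨C, hC, rfl⟩
    positivity
  have hbdd : BddBelow S := ⟨0, hnonneg⟩
  have hmemcard : ∀ C ∈ P.powersetCard k, C.card = k := by
    intro C hC; exact (Finset.mem_powersetCard.mp hC).2
  constructor
  · intro h
    obtain ⟨C, hC, hCy⟩ := hne.csInf_mem hfin
    refine ⟨C, hC, ?_⟩
    have h0 : 0 ≤ sInf S := hnonneg _ (hne.csInf_mem hfin)
    have h2 : sInf S ≤ ρ ^ 2 := by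
      calc sInf S = Real.sqrt (sInf S) ^ 2 := (Real.sq_sqrt h0).symm
        _ ≤ ρ ^ 2 := pow_le_pow_left₀ (Real.sqrt_nonneg _) h 2
    have := key hk0 C (hmemcard C hC) x ▸ (hCy ▸ h2)
    linarith [this]
  · rintro ⟨C, hC, hle⟩
    have hmem : ((k : ℝ)⁻¹ * ∑ p ∈ C, ‖x - p‖ ^ 2) ∈ S := ⟨C, hC, rfl⟩
    have h1 : sInf S ≤ ρ ^ 2 := by
      refine le_trans (csInf_le hbdd hmem) ?_
      rw [key hk0 C (hmemcard C hC) x]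
      linarith
    calc kdist P k x = Real.sqrt (sInf S) := rfl
      _ ≤ Real.sqrt (ρ ^ 2) := Real.sqrt_le_sqrt h1
      _ = ρ := by rw [Real.sqrt_sq hρ]

end
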